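/- Let wᵢ = (w₁ᵢ, w₂ᵢ, w₃ᵢ) ∈ ℝ₊³ satisfy wᵢ = B(kᵢ)·wᵢ₊₁ for a sequence of positive naturals kᵢ, with w₁ᵢ > w₂ᵢ + w₃ᵢ and w₂ᵢ > w₃ᵢ. Define xᵢ = (w₁ᵢ−w₂ᵢ−w₃ᵢ, w₃ᵢ, w₂ᵢ−w₃ᵢ, w₃ᵢ, w₂ᵢ, w₁ᵢ−w₂ᵢ, w₃ᵢ, w₂ᵢ, w₁ᵢ−w₂ᵢ−w₃ᵢ) ∈ ℝ⁹. Then xᵢ = R(kᵢ)·xᵢ₊₁ for all i ≥ 0. -/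

import Mathlib

open Matrix

/-- The matrix B(k) from the paper, over the reals. -/
def Bmat (k : ℕ) : Matrix (Fin 3) (Fin 3) ℝ := !![(k : ℝ), (k : ℝ), 1; 1, 0, 0; 0, 1, 0]

/-- The 9×9 matrix `R(k)` from the paper. -/
def Rmat (k : ℕ) : Matrix (Fin 9) (Fin 9) ℝ :=
  !![0, (k:ℝ)-1, (k:ℝ)-1, 0, 0, 0, (k:ℝ), (k:ℝ)-1, (k:ℝ)-1;
     0, 0, 0, 0, 0, 0, 0, 1, 0;
     0, 1, 0, 0, 0, 0, 0, 0, 1;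
     0, 0, 1, 0, 0, 0, 1, 0, 0;
     1, 1, 1, 1, 0, 0, 0, 0, 0;
     0, (k:ℝ), (k:ℝ), 0, 0, 0, (k:ℝ), (k:ℝ)-1, (k:ℝ)-1;
     0, 0, 0, 0, 1, 0, 0, 0, 0;
     0, 1, 1, 0, 0, 1, 0, 0, 0;
     (k:ℝ)-1, (k:ℝ)-1, (k:ℝ)-1, (k:ℝ), 0, 0, 0, (k:ℝ)-1, 0]

theorem stmt14 (k : ℕ → ℕ) (hk : ∀ i, 1 ≤ k i)
    (w : ℕ → Fin 3 → ℝ) (hw : ∀ i j, 0 < w i j)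
    (hrec : ∀ i, w i = (Bmat (k i)).mulVec (w (i + 1)))
    (htri : ∀ i, w i 1 + w i 2 < w i 0) (h23 : ∀ i, w i 2 < w i 1)
    (x : ℕ → Fin 9 → ℝ)
    (hx : ∀ i, x i = ![w i 0 - w i 1 - w i 2, w i 2, w i 1 - w i 2, w i 2, w i 1,
      w i 0 - w i 1, w i 2, w i 1, w i 0 - w i 1 - w i 2]) :
    ∀ i, x i = (Rmat (k i)).mulVec (x (i + 1)) := by
  intro i
  have h0 := congrFun (hrec i) 0
  have h1 := congrFun (hrec i) 1
  have h2 := congrFun (hrec i) 2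
  simp [Bmat, mulVec, dotProduct, Fin.sum_univ_three] at h0 h1 h2
  rw [hx i, hx (i + 1), h0, h1, h2]
  simp only [Rmat, Matrix.cons_mulVec, Matrix.cons_dotProduct, Matrix.dotProduct_of_isEmpty,
    Matrix.empty_mulVec, add_zero, Matrix.cons_val_zero, Matrix.cons_val_one, Matrix.head_cons,
    Matrix.cons_val_two, Matrix.tail_cons]
  simp only [Matrix.vecCons, Fin.cons_inj]
  refine ⟨by ring, by ring, by ring, by ring, by ring, by ring, by ring, by ring, by ring, trivial⟩
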